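/- Let (S, ≤) be a semilinear order and f : S → S a function preserving B and ¬B (on pairwise distinct triples) that is injective. Suppose there exist a,b with a ⊥ b and f(a) < f(b). If there exists c with c > b and B(a,c,b), then f(c) < f(b). Consequently, f maps some comparable pair to a reversed pair: there exist x,y with x < y and f(y) < f(x). -/
import Mathlib


variable {S : Type*} [PartialOrder S]

/-- Incomparability in a partial order. -/
def Incomp (x y : S) : Prop := ¬ x ≤ y ∧ ¬ y ≤ x

/-- Betweenness relation of a semilinear order. -/
def TreeBtw (a b c : S) : Prop :=
  b ≠ a ∧ b ≠ c ∧
    ((a < b ∧ b ≤ c) ∨ (c < b ∧ b ≤ a) ∨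
      (Incomp a c ∧ a < b ∧ c < b ∧ ∀ d, a < d → c < d → b ≤ d))

/-- If an injective function preserving B and ¬B maps an
incomparable pair to a comparable one, it reverses some comparable pair. -/
theorem reverses_pair_of_violates_incomp
    (hchain : ∀ x y z : S, x ≤ y → x ≤ z → y ≤ z ∨ z ≤ y)
    (hub : ∀ x y : S, ∃ z, x ≤ z ∧ y ≤ z)
    (hrich : ∀ x y : S, Incomp x y → ∃ c, y < c ∧ TreeBtw x c y)
    (f : S → S) (hinj : Function.Injective f)
    (hB : ∀ x y z : S, TreeBtw x y z → TreeBtw (f x) (f y) (f z))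
    (hnB : ∀ x y z : S, x ≠ y → y ≠ z → z ≠ x → ¬ TreeBtw x y z →
      ¬ TreeBtw (f x) (f y) (f z))
    (a b : S) (hab : Incomp a b) (hfab : f a < f b) :
    (∀ c, b < c → TreeBtw a c b → f c < f b) ∧ ∃ x y : S, x < y ∧ f y < f x := by
  have key : ∀ c, b < c → TreeBtw a c b → f c < f b := by
    intro c hbc htb
    obtain ⟨h1, h2, h3⟩ := hB a c b htb
    rcases h3 with ⟨h4, h5⟩ | ⟨h4, h5⟩ | ⟨⟨hi1, hi2⟩, _⟩
    · exact lt_of_le_of_ne h5 h2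
    · exact absurd (lt_trans (lt_of_le_of_lt h5 hfab) h4) (lt_irrefl _)
    · exact absurd hfab.le hi1
  refine ⟨key, ?_⟩
  obtain ⟨c, hbc, htb⟩ := hrich a b hab
  exact ⟨b, c, hbc, key c hbc htb⟩
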